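/- arXiv:2207.09768 — 3 statements merged into one kernel-verified Lean document; each statement's English description precedes it below -/
import Mathlib

section
/- Let H_Y and H_A be RKHSs with bounded kernels k_Y and k_A over measurable spaces Ω_Y and Ω_A, and let k = k_Y ⊗ k_A be the tensor product kernel on the RKHS H_Y ⊗ H_A. Suppose k is characteristic, i.e., the map sending a probability measure μ on Ω_Y × Ω_A to its kernel mean embedding ∫ k(·, (y,a)) dμ(y,a) is injective. Let P be a probability measure on Ω_Y × Ω_A with marginals P_Y and P_A. Then the mean embedding of P equals the tensor product of the mean embeddings of P_Y and P_A, i.e., μ_P = μ_{P_Y} ⊗ μ_{P_A}, if and only if P = P_Y ⊗ P_A (i.e., Y and A are independent under P). -/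
open MeasureTheory

/-- Tensor-product kernel mean embeddings: modelling the RKHSs via bounded strongly
measurable feature maps `φY, φA` and the tensor product via a continuous bilinear map `tm`
with `⟪tm f g, tm f' g'⟫ = ⟪f, f'⟫ ⟪g, g'⟫`.  If the tensor product kernel is
characteristic (the mean-embedding map is injective on probability measures on
`ΩY × ΩA`), then for a probability measure `P` on `ΩY × ΩA`, the embedding of `P`
equals the tensor product of the embeddings of its marginals iff `P` is the product of
its marginals. -/
theorem stmt2 {ΩY ΩA HY HA H : Type*}
    [MeasurableSpace ΩY] [MeasurableSpace ΩA]
    [NormedAddCommGroup HY] [InnerProductSpace ℝ HY] [CompleteSpace HY]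
    [NormedAddCommGroup HA] [InnerProductSpace ℝ HA] [CompleteSpace HA]
    [NormedAddCommGroup H] [InnerProductSpace ℝ H] [CompleteSpace H]
    (tm : HY →L[ℝ] HA →L[ℝ] H)
    (htm : ∀ (f f' : HY) (g g' : HA),
      (inner ℝ (tm f g) (tm f' g') : ℝ) = (inner ℝ f f' : ℝ) * (inner ℝ g g' : ℝ))
    (φY : ΩY → HY) (φA : ΩA → HA)
    (hφYm : StronglyMeasurable φY) (hφAm : StronglyMeasurable φA)
    (CY CA : ℝ) (hbY : ∀ y, ‖φY y‖ ≤ CY) (hbA : ∀ a, ‖φA a‖ ≤ CA)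
    (hchar : ∀ μ ν : Measure (ΩY × ΩA), IsProbabilityMeasure μ → IsProbabilityMeasure ν →
      (∫ p, tm (φY p.1) (φA p.2) ∂μ) = (∫ p, tm (φY p.1) (φA p.2) ∂ν) → μ = ν)
    (P : Measure (ΩY × ΩA)) [IsProbabilityMeasure P] :
    (∫ p, tm (φY p.1) (φA p.2) ∂P)
        = tm (∫ p, φY p.1 ∂P) (∫ p, φA p.2 ∂P)
      ↔ P = (P.map Prod.fst).prod (P.map Prod.snd) := by
  have hPY : IsProbabilityMeasure (P.map Prod.fst) :=
    Measure.isProbabilityMeasure_map measurable_fst.aemeasurable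
  have hPA : IsProbabilityMeasure (P.map Prod.snd) :=
    Measure.isProbabilityMeasure_map measurable_snd.aemeasurable
  set μY := P.map Prod.fst with hμY
  set μA := P.map Prod.snd with hμA
  -- nonemptiness, to get nonnegativity of bounds
  have hne : Nonempty (ΩY × ΩA) := by
    rcases isEmpty_or_nonempty (ΩY × ΩA) with h | h
    · exfalso
      have h1 : P Set.univ = 1 := measure_univ
      rw [Set.univ_eq_empty_iff.2 h] at h1
      simp at h1
    · exact h
  obtain ⟨⟨y0, a0⟩⟩ := hne
  have hCY0 : 0 ≤ CY := (norm_nonneg _).trans (hbY y0)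
  have hCA0 : 0 ≤ CA := (norm_nonneg _).trans (hbA a0)
  -- integrability of the feature maps
  have hiY : Integrable φY μY :=
    ⟨hφYm.aestronglyMeasurable,
      HasFiniteIntegral.of_bounded (C := CY) (Filter.Eventually.of_forall hbY)⟩
  have hiA : Integrable φA μA :=
    ⟨hφAm.aestronglyMeasurable,
      HasFiniteIntegral.of_bounded (C := CA) (Filter.Eventually.of_forall hbA)⟩
  -- marginal mean embeddings
  have hmargY : (∫ p : ΩY × ΩA, φY p.1 ∂P) = ∫ y, φY y ∂μY :=
    (integral_map measurable_fst.aemeasurable hφYm.aestronglyMeasurable).symm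
  have hmargA : (∫ p : ΩY × ΩA, φA p.2 ∂P) = ∫ a, φA a ∂μA :=
    (integral_map measurable_snd.aemeasurable hφAm.aestronglyMeasurable).symm
  -- strong measurability of the joint feature map
  have hSM : StronglyMeasurable fun p : ΩY × ΩA => tm (φY p.1) (φA p.2) :=
    tm.isBoundedBilinearMap.continuous.comp_stronglyMeasurable
      ((hφYm.comp_measurable measurable_fst).prodMk
        (hφAm.comp_measurable measurable_snd))
  -- integrability of the joint feature map on the product measure
  have hint : Integrable (fun p : ΩY × ΩA => tm (φY p.1) (φA p.2)) (μY.prod μA) := by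
    refine ⟨hSM.aestronglyMeasurable,
      HasFiniteIntegral.of_bounded (C := ‖tm‖ * CY * CA)
        (Filter.Eventually.of_forall fun p => ?_)⟩
    calc ‖tm (φY p.1) (φA p.2)‖ ≤ ‖tm‖ * ‖φY p.1‖ * ‖φA p.2‖ := tm.le_opNorm₂ _ _
      _ ≤ ‖tm‖ * CY * CA := by
          gcongr
          · exact hbY _
          · exact hbA _
  -- key computation: embedding of the product measure
  have hprod : (∫ p, tm (φY p.1) (φA p.2) ∂(μY.prod μA))
      = tm (∫ y, φY y ∂μY) (∫ a, φA a ∂μA) := by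
    rw [integral_prod _ hint]
    have h1 : ∀ y, (∫ a, tm (φY y) (φA a) ∂μA) = tm (φY y) (∫ a, φA a ∂μA) :=
      fun y => ((tm (φY y)).integral_comp_comm hiA)
    simp_rw [h1]
    have h2 : ∀ y, tm (φY y) (∫ a, φA a ∂μA) = tm.flip (∫ a, φA a ∂μA) (φY y) :=
      fun y => rfl
    simp_rw [h2]
    exact (tm.flip (∫ a, φA a ∂μA)).integral_comp_comm hiY
  constructor
  · intro h
    refine hchar P (μY.prod μA) inferInstance inferInstance ?_
    rw [h, hprod, hmargY, hmargA]
  · intro h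
    rw [hmargY, hmargA, ← hprod]
    rw [h]
end

section
/- Let Y, A, S be random variables on a probability space, with Y and A taking values in measurable spaces carrying RKHSs H_Y and H_A with bounded kernels k_Y and k_A such that the tensor product kernel k_Y ⊗ k_A is characteristic. Define HSCIC(Y, A | S)(ω) := ‖μ_{Y,A | S = S(ω)} − μ_{Y | S = S(ω)} ⊗ μ_{A | S = S(ω)}‖ in the tensor product RKHS, where μ denotes kernel mean embeddings of regular conditional distributions. Then HSCIC(Y, A | S) = 0 almost surely if and only if Y is conditionally independent of A given S. -/
open MeasureTheory ProbabilityTheory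

section aux
variable {ΩY ΩA HY HA H : Type*}
    [MeasurableSpace ΩY] [MeasurableSpace ΩA]
    [NormedAddCommGroup HY] [InnerProductSpace ℝ HY] [CompleteSpace HY]
    [NormedAddCommGroup HA] [InnerProductSpace ℝ HA] [CompleteSpace HA]
    [NormedAddCommGroup H] [InnerProductSpace ℝ H] [CompleteSpace H]

lemma integrable_of_bdd {α : Type*} [MeasurableSpace α] {E : Type*} [NormedAddCommGroup E]
    {f : α → E} (hf : StronglyMeasurable f) {C : ℝ} (hb : ∀ x, ‖f x‖ ≤ C)
    (μ : Measure α) [IsFiniteMeasure μ] : Integrable f μ :=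
  ⟨hf.aestronglyMeasurable, HasFiniteIntegral.of_bounded (Filter.Eventually.of_forall hb)⟩

lemma embed_prod (tm : HY →L[ℝ] HA →L[ℝ] H)
    (φY : ΩY → HY) (φA : ΩA → HA)
    (hφYm : StronglyMeasurable φY) (hφAm : StronglyMeasurable φA)
    (CY CA : ℝ) (hbY : ∀ y, ‖φY y‖ ≤ CY) (hbA : ∀ a, ‖φA a‖ ≤ CA)
    (ν : Measure ΩY) (ρ : Measure ΩA) [IsProbabilityMeasure ν] [IsProbabilityMeasure ρ] :
    (∫ p, tm (φY p.1) (φA p.2) ∂(ν.prod ρ))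
      = tm (∫ y, φY y ∂ν) (∫ a, φA a ∂ρ) := by
  have hintY : Integrable φY ν := integrable_of_bdd hφYm hbY ν
  have hintA : Integrable φA ρ := integrable_of_bdd hφAm hbA ρ
  have hsm : StronglyMeasurable (fun p : ΩY × ΩA => tm (φY p.1) (φA p.2)) := by
    have hc : Continuous (fun q : HY × HA => tm q.1 q.2) := tm.continuous₂
    exact hc.comp_stronglyMeasurable
      ((hφYm.comp_measurable measurable_fst).prodMk (hφAm.comp_measurable measurable_snd))
  have hint : Integrable (fun p : ΩY × ΩA => tm (φY p.1) (φA p.2)) (ν.prod ρ) := by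
    refine integrable_of_bdd hsm (C := ‖tm‖ * CY * CA) (fun p => ?_) _
    calc ‖tm (φY p.1) (φA p.2)‖ ≤ ‖tm‖ * ‖φY p.1‖ * ‖φA p.2‖ := tm.le_opNorm₂ _ _
    _ ≤ ‖tm‖ * CY * CA := by
        have h0 : (0:ℝ) ≤ ‖φA p.2‖ := norm_nonneg _
        have h1 : (0:ℝ) ≤ CA := le_trans h0 (hbA p.2)
        have h2 : (0:ℝ) ≤ ‖tm‖ := ContinuousLinearMap.opNorm_nonneg tm
        have h3 : (0:ℝ) ≤ ‖tm‖ * ‖φY p.1‖ := mul_nonneg h2 (norm_nonneg _)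
        calc ‖tm‖ * ‖φY p.1‖ * ‖φA p.2‖ ≤ ‖tm‖ * ‖φY p.1‖ * CA :=
              mul_le_mul_of_nonneg_left (hbA p.2) h3
        _ ≤ ‖tm‖ * CY * CA := by
              have := mul_le_mul_of_nonneg_left (hbY p.1) h2
              exact mul_le_mul_of_nonneg_right this h1
  rw [integral_prod _ hint]
  have h1 : ∀ y, (∫ a, tm (φY y) (φA a) ∂ρ) = tm (φY y) (∫ a, φA a ∂ρ) := fun y =>
    (tm (φY y)).integral_comp_comm hintA
  simp_rw [h1]
  exact (tm.flip (∫ a, φA a ∂ρ)).integral_comp_comm hintY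
end aux

/-- HSCIC characterizes conditional independence.  Feature maps `φY, φA` model bounded
kernels with RKHSs `HY, HA`; `tm` models the tensor product; the tensor kernel is assumed
characteristic.  Conditional distributions are the regular conditional distributions
`condDistrib`.  Then `HSCIC(Y, A | S)(ω) := ‖μ_{(Y,A)|S=S ω} − μ_{Y|S=S ω} ⊗ μ_{A|S=S ω}‖`
vanishes `P`-a.s. iff `Y ⫫ A | S`, i.e. iff the joint conditional distribution factorizes
for `P∘S⁻¹`-a.e. `s`. -/
theorem stmt3 {Ω ΩY ΩA ΩS HY HA H : Type*}
    [MeasurableSpace Ω]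
    [MeasurableSpace ΩY] [StandardBorelSpace ΩY] [Nonempty ΩY]
    [MeasurableSpace ΩA] [StandardBorelSpace ΩA] [Nonempty ΩA]
    [MeasurableSpace ΩS]
    [NormedAddCommGroup HY] [InnerProductSpace ℝ HY] [CompleteSpace HY]
    [NormedAddCommGroup HA] [InnerProductSpace ℝ HA] [CompleteSpace HA]
    [NormedAddCommGroup H] [InnerProductSpace ℝ H] [CompleteSpace H]
    (tm : HY →L[ℝ] HA →L[ℝ] H)
    (htm : ∀ (f f' : HY) (g g' : HA),
      (inner ℝ (tm f g) (tm f' g') : ℝ) = (inner ℝ f f' : ℝ) * (inner ℝ g g' : ℝ))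
    (φY : ΩY → HY) (φA : ΩA → HA)
    (hφYm : StronglyMeasurable φY) (hφAm : StronglyMeasurable φA)
    (CY CA : ℝ) (hbY : ∀ y, ‖φY y‖ ≤ CY) (hbA : ∀ a, ‖φA a‖ ≤ CA)
    (hchar : ∀ μ ν : Measure (ΩY × ΩA), IsProbabilityMeasure μ → IsProbabilityMeasure ν →
      (∫ p, tm (φY p.1) (φA p.2) ∂μ) = (∫ p, tm (φY p.1) (φA p.2) ∂ν) → μ = ν)
    (P : Measure Ω) [IsProbabilityMeasure P]
    (Y : Ω → ΩY) (A : Ω → ΩA) (S : Ω → ΩS)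
    (hY : Measurable Y) (hA : Measurable A) (hS : Measurable S) :
    (∀ᵐ ω ∂P,
        ‖(∫ p, tm (φY p.1) (φA p.2)
              ∂(condDistrib (fun ω' => (Y ω', A ω')) S P (S ω)))
          - tm (∫ y, φY y ∂(condDistrib Y S P (S ω)))
              (∫ a, φA a ∂(condDistrib A S P (S ω)))‖ = 0)
      ↔ (∀ᵐ s ∂(P.map S),
          condDistrib (fun ω' => (Y ω', A ω')) S P s
            = (condDistrib Y S P s).prod (condDistrib A S P s)) := by
  set κ := condDistrib (fun ω' => (Y ω', A ω')) S P with hκ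
  set κY := condDistrib Y S P with hκY
  set κA := condDistrib A S P with hκA
  -- pointwise equivalence, for every s
  have key : ∀ s : ΩS,
      (‖(∫ p, tm (φY p.1) (φA p.2) ∂(κ s))
          - tm (∫ y, φY y ∂(κY s)) (∫ a, φA a ∂(κA s))‖ = 0)
        ↔ κ s = (κY s).prod (κA s) := by
    intro s
    have hps : (∫ p, tm (φY p.1) (φA p.2) ∂((κY s).prod (κA s)))
        = tm (∫ y, φY y ∂(κY s)) (∫ a, φA a ∂(κA s)) :=
      embed_prod tm φY φA hφYm hφAm CY CA hbY hbA _ _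
    rw [norm_eq_zero, sub_eq_zero]
    constructor
    · intro h
      exact hchar _ _ inferInstance inferInstance (h.trans hps.symm)
    · intro h
      rw [h, hps]
  -- measurability of the norm function
  have hsm : StronglyMeasurable (fun p : ΩY × ΩA => tm (φY p.1) (φA p.2)) :=
    tm.continuous₂.comp_stronglyMeasurable
      ((hφYm.comp_measurable measurable_fst).prodMk (hφAm.comp_measurable measurable_snd))
  have hm1 : StronglyMeasurable (fun s => ∫ p, tm (φY p.1) (φA p.2) ∂(κ s)) := by
    have := (hsm.comp_measurable (measurable_snd : Measurable fun q : ΩS × (ΩY × ΩA) => q.2)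
      ).integral_kernel_prod_right' (κ := κ)
    exact this
  have hmY : StronglyMeasurable (fun s => ∫ y, φY y ∂(κY s)) := by
    have := (hφYm.comp_measurable (measurable_snd : Measurable fun q : ΩS × ΩY => q.2)
      ).integral_kernel_prod_right' (κ := κY)
    exact this
  have hmA : StronglyMeasurable (fun s => ∫ a, φA a ∂(κA s)) := by
    have := (hφAm.comp_measurable (measurable_snd : Measurable fun q : ΩS × ΩA => q.2)
      ).integral_kernel_prod_right' (κ := κA)
    exact this
  have hF : StronglyMeasurable (fun s =>
      (∫ p, tm (φY p.1) (φA p.2) ∂(κ s))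
        - tm (∫ y, φY y ∂(κY s)) (∫ a, φA a ∂(κA s))) := by
    refine hm1.sub ?_
    exact tm.continuous₂.comp_stronglyMeasurable (hmY.prodMk hmA)
  have hmeas : MeasurableSet {s : ΩS |
      ‖(∫ p, tm (φY p.1) (φA p.2) ∂(κ s))
        - tm (∫ y, φY y ∂(κY s)) (∫ a, φA a ∂(κA s))‖ = 0} := by
    exact hF.norm.measurable (measurableSet_singleton 0)
  rw [show (∀ᵐ ω ∂P,
        ‖(∫ p, tm (φY p.1) (φA p.2) ∂(κ (S ω)))
          - tm (∫ y, φY y ∂(κY (S ω))) (∫ a, φA a ∂(κA (S ω)))‖ = 0)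
      ↔ (∀ᵐ s ∂(P.map S),
        ‖(∫ p, tm (φY p.1) (φA p.2) ∂(κ s))
          - tm (∫ y, φY y ∂(κY s)) (∫ a, φA a ∂(κA s))‖ = 0) from
    (ae_map_iff hS.aemeasurable hmeas).symm]
  exact ⟨fun h => h.mono fun s hs => (key s).mp hs,
    fun h => h.mono fun s hs => (key s).mpr hs⟩
end

section
/- Let Y and A be random variables with values in measurable spaces, H_Y and H_A RKHSs with bounded kernels k_Y, k_A, and P the joint law of (Y, A). Then the squared MMD between the joint embedding and the product of marginal embeddings expands as: ‖μ_{Y,A} − μ_Y ⊗ μ_A‖² = E[k_Y(Y,Y')k_A(A,A')] − 2·E[k_Y(Y,Y')k_A(A,A'')] + E[k_Y(Y,Y')]·E[k_A(A,A')], where (Y,A), (Y',A'), (Y'',A'') are i.i.d. copies of the joint pair, and in the middle term A'' is taken from an independent copy (the cross term couples Y with its own A but pairs against independent samples). -/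
open MeasureTheory

lemma inner_int_int {α β H : Type*} [MeasurableSpace α] [MeasurableSpace β]
    [NormedAddCommGroup H] [InnerProductSpace ℝ H] [CompleteSpace H]
    (μ : Measure α) (ν : Measure β) [IsFiniteMeasure μ] [IsFiniteMeasure ν]
    {F : α → H} {G : β → H} (hF : StronglyMeasurable F) (hG : StronglyMeasurable G)
    {CF CG : ℝ} (hbF : ∀ x, ‖F x‖ ≤ CF) (hbG : ∀ y, ‖G y‖ ≤ CG) :
    (inner ℝ (∫ x, F x ∂μ) (∫ y, G y ∂ν) : ℝ)
      = ∫ q, (inner ℝ (F q.1) (G q.2) : ℝ) ∂(μ.prod ν) := by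
  have hFi : Integrable F μ :=
    (integrable_const CF).mono' hF.aestronglyMeasurable (ae_of_all _ hbF)
  have hGi : Integrable G ν :=
    (integrable_const CG).mono' hG.aestronglyMeasurable (ae_of_all _ hbG)
  have hint : Integrable (fun q : α × β => (inner ℝ (F q.1) (G q.2) : ℝ)) (μ.prod ν) := by
    refine (integrable_const (CF * CG)).mono'
      (((hF.comp_measurable measurable_fst).inner
        (hG.comp_measurable measurable_snd)).aestronglyMeasurable)
      (ae_of_all _ fun q => ?_)
    calc ‖(inner ℝ (F q.1) (G q.2) : ℝ)‖ ≤ ‖F q.1‖ * ‖G q.2‖ := norm_inner_le_norm _ _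
      _ ≤ CF * CG := mul_le_mul (hbF _) (hbG _) (norm_nonneg _)
          (le_trans (norm_nonneg _) (hbF q.1))
  calc (inner ℝ (∫ x, F x ∂μ) (∫ y, G y ∂ν) : ℝ)
      = (inner ℝ (∫ y, G y ∂ν) (∫ x, F x ∂μ) : ℝ) := real_inner_comm _ _
    _ = ∫ x, (inner ℝ (∫ y, G y ∂ν) (F x) : ℝ) ∂μ := (integral_inner hFi _).symm
    _ = ∫ x, ∫ y, (inner ℝ (F x) (G y) : ℝ) ∂ν ∂μ := by
        refine integral_congr_ae (ae_of_all _ fun x => ?_)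
        simp only []; rw [real_inner_comm, ← integral_inner hGi]
    _ = ∫ q, (inner ℝ (F q.1) (G q.2) : ℝ) ∂(μ.prod ν) := integral_integral hint

/-- Population HSIC expansion: with bounded feature maps `φY, φA` (kernels
`k_Y(y,y') = ⟪φY y, φY y'⟫`, `k_A(a,a') = ⟪φA a, φA a'⟫`), tensor product `tm`, and `P`
the joint law of `(Y, A)`, the squared MMD between the joint embedding and the product of
the marginal embeddings equals
`E[k_Y(Y,Y')k_A(A,A')] − 2 E[k_Y(Y,Y')k_A(A,A'')] + E[k_Y(Y,Y')]·E[k_A(A,A')]`,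
with `(Y,A), (Y',A'), (Y'',A'')` i.i.d. copies of the joint pair. -/
theorem stmt15 {ΩY ΩA HY HA H : Type*}
    [MeasurableSpace ΩY] [MeasurableSpace ΩA]
    [NormedAddCommGroup HY] [InnerProductSpace ℝ HY] [CompleteSpace HY]
    [NormedAddCommGroup HA] [InnerProductSpace ℝ HA] [CompleteSpace HA]
    [NormedAddCommGroup H] [InnerProductSpace ℝ H] [CompleteSpace H]
    (tm : HY →L[ℝ] HA →L[ℝ] H)
    (htm : ∀ (f f' : HY) (g g' : HA),
      (inner ℝ (tm f g) (tm f' g') : ℝ) = (inner ℝ f f' : ℝ) * (inner ℝ g g' : ℝ))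
    (φY : ΩY → HY) (φA : ΩA → HA)
    (hφYm : StronglyMeasurable φY) (hφAm : StronglyMeasurable φA)
    (CY CA : ℝ) (hbY : ∀ y, ‖φY y‖ ≤ CY) (hbA : ∀ a, ‖φA a‖ ≤ CA)
    (P : Measure (ΩY × ΩA)) [IsProbabilityMeasure P] :
    ‖(∫ p, tm (φY p.1) (φA p.2) ∂P)
        - tm (∫ p, φY p.1 ∂P) (∫ p, φA p.2 ∂P)‖ ^ 2
      = (∫ q, (inner ℝ (φY q.1.1) (φY q.2.1) : ℝ) * (inner ℝ (φA q.1.2) (φA q.2.2) : ℝ)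
            ∂(P.prod P))
        - 2 * (∫ q, (inner ℝ (φY q.1.1) (φY q.2.1.1) : ℝ)
                  * (inner ℝ (φA q.1.2) (φA q.2.2.2) : ℝ)
            ∂(P.prod (P.prod P)))
        + (∫ q, (inner ℝ (φY q.1.1) (φY q.2.1) : ℝ) ∂(P.prod P))
          * (∫ q, (inner ℝ (φA q.1.2) (φA q.2.2) : ℝ) ∂(P.prod P)) := by
  set F : ΩY × ΩA → H := fun p => tm (φY p.1) (φA p.2) with hFdef
  set G : (ΩY × ΩA) × (ΩY × ΩA) → H := fun r => tm (φY r.1.1) (φA r.2.2) with hGdef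
  -- measurability
  have hY1 : StronglyMeasurable (fun p : ΩY × ΩA => φY p.1) :=
    hφYm.comp_measurable measurable_fst
  have hA2 : StronglyMeasurable (fun p : ΩY × ΩA => φA p.2) :=
    hφAm.comp_measurable measurable_snd
  have hFm : StronglyMeasurable F := by
    have : Continuous (fun q : HY × HA => tm q.1 q.2) := tm.continuous₂
    exact this.comp_stronglyMeasurable (hY1.prodMk hA2)
  have hGm : StronglyMeasurable G := by
    have : Continuous (fun q : HY × HA => tm q.1 q.2) := tm.continuous₂
    exact this.comp_stronglyMeasurable
      ((hφYm.comp_measurable (measurable_fst.comp measurable_fst)).prodMk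
        (hφAm.comp_measurable (measurable_snd.comp measurable_snd)))
  -- bounds
  have hbnd : ∀ (y : HY) (a : HA), ‖y‖ ≤ CY → ‖a‖ ≤ CA → ‖tm y a‖ ≤ ‖tm‖ * CY * CA := by
    intro y a hy ha
    calc ‖tm y a‖ ≤ ‖tm y‖ * ‖a‖ := (tm y).le_opNorm a
      _ ≤ (‖tm‖ * ‖y‖) * ‖a‖ := by
          exact mul_le_mul_of_nonneg_right (tm.le_opNorm y) (norm_nonneg _)
      _ ≤ (‖tm‖ * CY) * CA := by
          refine mul_le_mul ?_ ha (norm_nonneg _)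
            (mul_nonneg (norm_nonneg tm) ((norm_nonneg y).trans hy))
          exact mul_le_mul_of_nonneg_left hy (norm_nonneg tm)
      _ = ‖tm‖ * CY * CA := rfl
  have hbF : ∀ p, ‖F p‖ ≤ ‖tm‖ * CY * CA := fun p => hbnd _ _ (hbY _) (hbA _)
  have hbG : ∀ r, ‖G r‖ ≤ ‖tm‖ * CY * CA := fun r => hbnd _ _ (hbY _) (hbA _)
  have hbY1 : ∀ p : ΩY × ΩA, ‖φY p.1‖ ≤ CY := fun p => hbY _
  have hbA2 : ∀ p : ΩY × ΩA, ‖φA p.2‖ ≤ CA := fun p => hbA _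
  -- integrabilities
  have hY1i : Integrable (fun p : ΩY × ΩA => φY p.1) P :=
    (integrable_const CY).mono' hY1.aestronglyMeasurable (ae_of_all _ hbY1)
  have hA2i : Integrable (fun p : ΩY × ΩA => φA p.2) P :=
    (integrable_const CA).mono' hA2.aestronglyMeasurable (ae_of_all _ hbA2)
  have hGi : Integrable G (P.prod P) :=
    (integrable_const _).mono' hGm.aestronglyMeasurable (ae_of_all _ hbG)
  -- ∫ G = tm mY mA
  have hGint : ∫ r, G r ∂(P.prod P) = tm (∫ p, φY p.1 ∂P) (∫ p, φA p.2 ∂P) := by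
    have hGi' : Integrable
        (Function.uncurry fun (x y : ΩY × ΩA) => tm (φY x.1) (φA y.2)) (P.prod P) := hGi
    have e0 : ∫ r, G r ∂(P.prod P) = ∫ x, ∫ y, tm (φY x.1) (φA y.2) ∂P ∂P :=
      (integral_integral hGi').symm
    rw [e0]
    have step1 : ∀ x : ΩY × ΩA,
        ∫ y, tm (φY x.1) (φA y.2) ∂P = tm (φY x.1) (∫ p, φA p.2 ∂P) := fun x =>
      (tm (φY x.1)).integral_comp_comm hA2i
    rw [integral_congr_ae (ae_of_all _ fun x => step1 x)]
    have : ∀ x : ΩY × ΩA, tm (φY x.1) (∫ p, φA p.2 ∂P)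
        = (tm.flip (∫ p, φA p.2 ∂P)) (φY x.1) := fun x => rfl
    rw [integral_congr_ae (ae_of_all _ fun x => this x)]
    rw [(tm.flip (∫ p, φA p.2 ∂P)).integral_comp_comm hY1i]
    rfl
  -- expand the square
  rw [norm_sub_sq_real, ← hGint]
  rw [← real_inner_self_eq_norm_sq (∫ p, F p ∂P)]
  have h1 : (inner ℝ (∫ p, F p ∂P) (∫ p, F p ∂P) : ℝ)
      = ∫ q, (inner ℝ (φY q.1.1) (φY q.2.1) : ℝ) * (inner ℝ (φA q.1.2) (φA q.2.2) : ℝ)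
          ∂(P.prod P) := by
    rw [inner_int_int P P hFm hFm hbF hbF]
    exact integral_congr_ae (ae_of_all _ fun q => htm _ _ _ _)
  have h2 : (inner ℝ (∫ p, F p ∂P) (∫ r, G r ∂(P.prod P)) : ℝ)
      = ∫ q, (inner ℝ (φY q.1.1) (φY q.2.1.1) : ℝ) * (inner ℝ (φA q.1.2) (φA q.2.2.2) : ℝ)
          ∂(P.prod (P.prod P)) := by
    rw [inner_int_int P (P.prod P) hFm hGm hbF hbG]
    exact integral_congr_ae (ae_of_all _ fun q => htm _ _ _ _)
  have h3 : ‖∫ r, G r ∂(P.prod P)‖ ^ 2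
      = (∫ q, (inner ℝ (φY q.1.1) (φY q.2.1) : ℝ) ∂(P.prod P))
        * (∫ q, (inner ℝ (φA q.1.2) (φA q.2.2) : ℝ) ∂(P.prod P)) := by
    rw [← real_inner_self_eq_norm_sq, hGint,
      htm, inner_int_int P P hY1 hY1 hbY1 hbY1, inner_int_int P P hA2 hA2 hbA2 hbA2]
  rw [h1, h2, h3]
end
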